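/- Let X be a compact Hausdorff space satisfying S₁(O,O) (equivalently, compact scattered). Then player TWO has a winning strategy in the game G₁(O,O) on X. -/

import Mathlib

set_option linter.unusedSectionVars false

open Set

universe u
variable {X : Type u} [TopologicalSpace X]

/-- Cantor–Bendixson derivative. -/
def dset (F : Set X) : Set X := {x | x ∈ F ∧ x ∈ closure (F \ {x})}

theorem dset_subset (F : Set X) : dset F ⊆ F := fun _ h => h.1

theorem dset_mono {F G : Set X} (h : F ⊆ G) : dset F ⊆ dset G := by
  rintro x ⟨hx, hc⟩
  exact ⟨h hx, closure_mono (diff_subset_diff_left h) hc⟩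

theorem IsClosed.dset' {F : Set X} (hF : IsClosed F) : IsClosed (dset F) := by
  rw [← isOpen_compl_iff, isOpen_iff_mem_nhds]
  intro x hx
  by_cases hxF : x ∈ F
  · have hnc : x ∉ closure (F \ {x}) := fun hc => hx ⟨hxF, hc⟩
    have h2 : (closure (F \ {x}))ᶜ ∈ nhds x := (isClosed_closure.isOpen_compl).mem_nhds hnc
    filter_upwards [h2] with y hy hyd
    rcases hyd with ⟨hyF, hyc⟩
    by_cases hxy : y = x
    · exact hnc (hxy ▸ hyc)
    · exact hy (subset_closure ⟨hyF, fun he => hxy (by simpa using he)⟩)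
  · have h2 : Fᶜ ∈ nhds x := hF.isOpen_compl.mem_nhds hxF
    filter_upwards [h2] with y hy hyd
    exact hy hyd.1

noncomputable def CBR (R : Set X) : Ordinal.{u} → Set X
  | o => dset (R ∩ ⋂ o' : Set.Iio o, CBR R o'.1)
  termination_by o => o
  decreasing_by exact o'.2

theorem CBR_def (R : Set X) (o : Ordinal.{u}) :
    CBR R o = dset (R ∩ ⋂ o' : Set.Iio o, CBR R o'.1) := by
  rw [CBR]

theorem CBR_subset (R : Set X) (o : Ordinal.{u}) : CBR R o ⊆ R := by
  rw [CBR_def]; exact (dset_subset _).trans inter_subset_left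

theorem CBR_le_of_lt (R : Set X) {o o' : Ordinal.{u}} (h : o < o') : CBR R o' ⊆ CBR R o := by
  rw [CBR_def R o']
  refine ((dset_subset _).trans inter_subset_right).trans ?_
  exact iInter_subset (fun q : Set.Iio o' => CBR R q.1) ⟨o, h⟩

theorem CBR_mono {R R' : Set X} (h : R' ⊆ R) : ∀ o : Ordinal.{u}, CBR R' o ⊆ CBR R o
  | o => by
    rw [CBR_def, CBR_def]
    exact dset_mono (inter_subset_inter h (iInter_mono fun q => CBR_mono h q.1))
  termination_by o => o
  decreasing_by exact q.2

theorem isClosed_CBR {R : Set X} (hR : IsClosed R) : ∀ o : Ordinal.{u}, IsClosed (CBR R o)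
  | o => by
    rw [CBR_def]
    exact (hR.inter (isClosed_iInter fun q : Set.Iio o => isClosed_CBR hR q.1)).dset'
  termination_by o => o
  decreasing_by exact q.2
section PartB
open Set
variable {X : Type u} [TopologicalSpace X] [CompactSpace X] [T2Space X]

/-- Scatteredness. -/
def Scat (X : Type u) [TopologicalSpace X] : Prop :=
  ∀ F : Set X, IsClosed F → F.Nonempty → ∃ x ∈ F, x ∉ closure (F \ {x})

theorem dset_ne_self {X : Type u} [TopologicalSpace X] {F : Set X} (hsc : Scat X)
    (hF : IsClosed F) (hne : F.Nonempty) :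
    ∃ x ∈ F, x ∉ dset F := by
  obtain ⟨x, hx, hxc⟩ := hsc F hF hne
  exact ⟨x, hx, fun h => hxc h.2⟩

theorem CBR_anti (R : Set X) {o o' : Ordinal.{u}} (h : o ≤ o') : CBR R o' ⊆ CBR R o := by
  rcases eq_or_lt_of_le h with rfl | h
  · exact subset_rfl
  · exact CBR_le_of_lt R h

theorem exists_CBR_empty (hsc : Scat X) {R : Set X} (hR : IsClosed R) :
    ∃ o : Ordinal.{u}, CBR R o = ∅ := by
  by_contra hcon
  push_neg at hcon
  have hstrict : ∀ {o o' : Ordinal.{u}}, o < o' → CBR R o' ⊂ CBR R o := by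
    intro o o' hlt
    have hG : IsClosed (R ∩ ⋂ q : Set.Iio o', CBR R q.1) :=
      hR.inter (isClosed_iInter fun q : Set.Iio o' => isClosed_CBR hR q.1)
    have hGne : (R ∩ ⋂ q : Set.Iio o', CBR R q.1).Nonempty := by
      obtain ⟨x, hx⟩ := hcon o'
      rw [CBR_def] at hx
      exact ⟨x, dset_subset _ hx⟩
    obtain ⟨x, hxG, hxd⟩ := dset_ne_self hsc hG hGne
    have hxo : x ∈ CBR R o := (Set.mem_iInter.1 hxG.2) ⟨o, hlt⟩
    have hxo' : x ∉ CBR R o' := by rw [CBR_def]; exact hxd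
    exact ⟨CBR_le_of_lt R hlt, fun hsub => hxo' (hsub hxo)⟩
  have hinj : Function.Injective (CBR R : Ordinal.{u} → Set X) := by
    intro o o' he
    by_contra hne
    rcases lt_or_gt_of_ne hne with h | h
    · exact (hstrict h).ne he.symm
    · exact (hstrict h).ne he
  exact not_small_ordinal.{u, u} (small_of_injective hinj)

noncomputable def rk (R : Set X) : Ordinal.{u} := sInf {o | CBR R o = ∅}

theorem CBR_rk (hsc : Scat X) {R : Set X} (hR : IsClosed R) : CBR R (rk R) = ∅ :=
  csInf_mem (exists_CBR_empty hsc hR)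

theorem rk_mono (hsc : Scat X) {R R' : Set X} (hR : IsClosed R) (h : R' ⊆ R) :
    rk R' ≤ rk R :=
  csInf_le' (Set.eq_empty_of_subset_empty ((CBR_mono h (rk R)).trans (CBR_rk hsc hR).subset))

noncomputable def TOP (R : Set X) : Set X := R ∩ ⋂ q : Set.Iio (rk R), CBR R q.1

theorem dset_TOP (hsc : Scat X) {R : Set X} (hR : IsClosed R) : dset (TOP R) = ∅ := by
  rw [TOP, ← CBR_def]; exact CBR_rk hsc hR

theorem TOP_subset (R : Set X) : TOP R ⊆ R := inter_subset_left

theorem isClosed_TOP {R : Set X} (hR : IsClosed R) : IsClosed (TOP R) :=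
  hR.inter (isClosed_iInter fun q : Set.Iio (rk R) => isClosed_CBR hR q.1)

theorem TOP_mono {R R' : Set X} (h : R' ⊆ R) (hrk : rk R' = rk R) : TOP R' ⊆ TOP R := by
  intro x hx
  refine ⟨h hx.1, Set.mem_iInter.2 fun q => ?_⟩
  have hx2 := Set.mem_iInter.1 hx.2 ⟨q.1, by rw [hrk]; exact q.2⟩
  exact CBR_mono h q.1 hx2

theorem TOP_nonempty {R : Set X} (hR : IsClosed R) (hne : R.Nonempty) :
    (TOP R).Nonempty := by
  rcases eq_or_ne (rk R) 0 with h0 | h0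
  · have he : IsEmpty (Set.Iio (rk R)) := by
      rw [h0]; exact ⟨fun q => by simpa using q.2⟩
    rw [TOP, Set.iInter_of_empty, Set.inter_univ]
    exact hne
  · have hpos : (0 : Ordinal.{u}) < rk R := pos_iff_ne_zero.2 h0
    have hιne : Nonempty (Set.Iio (rk R)) := ⟨⟨0, hpos⟩⟩
    have hCne : ∀ q : Set.Iio (rk R), (CBR R q.1).Nonempty := by
      intro q
      rw [Set.nonempty_iff_ne_empty]
      intro he
      exact absurd (csInf_le' (s := {o | CBR R o = ∅}) he) (not_le.2 q.2)
    have hint : (⋂ q : Set.Iio (rk R), CBR R q.1).Nonempty := by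
      refine IsCompact.nonempty_iInter_of_directed_nonempty_isCompact_isClosed
        (fun q : Set.Iio (rk R) => CBR R q.1) ?_ hCne
        (fun q => (isClosed_CBR hR q.1).isCompact) (fun q => isClosed_CBR hR q.1)
      intro q q'
      rcases le_total q.1 q'.1 with h | h
      · exact ⟨q', CBR_anti R h, subset_rfl⟩
      · exact ⟨q, subset_rfl, CBR_anti R h⟩
    obtain ⟨x, hx⟩ := hint
    exact ⟨x, CBR_subset R _ (Set.mem_iInter.1 hx hιne.some), hx⟩

theorem TOP_finite (hsc : Scat X) {R : Set X} (hR : IsClosed R) : (TOP R).Finite := by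
  have hdt := dset_TOP hsc hR
  have hiso : ∀ x ∈ TOP R, ∃ V : Set X, IsOpen V ∧ x ∈ V ∧ V ∩ TOP R ⊆ {x} := by
    intro x hx
    have hxnd : x ∉ dset (TOP R) := by rw [hdt]; exact notMem_empty x
    have : x ∉ closure (TOP R \ {x}) := fun hc => hxnd ⟨hx, hc⟩
    have hV : (closure (TOP R \ {x}))ᶜ ∈ nhds x := isClosed_closure.isOpen_compl.mem_nhds this
    refine ⟨(closure (TOP R \ {x}))ᶜ, isClosed_closure.isOpen_compl, this, ?_⟩
    rintro y ⟨hy1, hy2⟩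
    by_contra hyx
    exact hy1 (subset_closure ⟨hy2, hyx⟩)
  choose! V hVo hVx hVs using hiso
  have hcov : TOP R ⊆ ⋃ x ∈ TOP R, V x := fun x hx => Set.mem_biUnion hx (hVx x hx)
  obtain ⟨t, hts, htf, htcov⟩ :=
    (isClosed_TOP hR).isCompact.elim_finite_subcover_image (fun x hx => hVo x hx) hcov
  refine Set.Finite.subset htf ?_
  intro y hy
  obtain ⟨x, hxt, hyV⟩ := Set.mem_iUnion₂.1 (htcov hy)
  have hyx : y = x := Set.mem_singleton_iff.1 (hVs x (hts hxt) ⟨hyV, hy⟩)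
  exact hyx ▸ hxt
end PartB
section Game
open Set
variable {X : Type u} [TopologicalSpace X] [CompactSpace X] [T2Space X] [Nonempty X]

open Classical in
noncomputable def chP (R : Set X) : X :=
  if h : (TOP R).Nonempty then h.choose else Classical.arbitrary X

theorem chP_mem {R : Set X} (hR : IsClosed R) (hne : R.Nonempty) : chP R ∈ TOP R := by
  classical
  rw [chP]
  rw [dif_pos (TOP_nonempty hR hne)]
  exact (TOP_nonempty hR hne).choose_spec

open Classical in
noncomputable def pick (R : Set X) (U : Set (Set X)) : Set X :=
  if h : ∃ T ∈ U, chP R ∈ T then h.choose else ∅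

theorem pick_spec {R : Set X} {U : Set (Set X)} (hc : ⋃₀ U = Set.univ) :
    pick R U ∈ U ∧ chP R ∈ pick R U := by
  have h : ∃ T ∈ U, chP R ∈ T := by
    have : chP R ∈ ⋃₀ U := hc ▸ Set.mem_univ _
    exact this
  classical
  rw [pick]
  rw [dif_pos h]
  exact ⟨h.choose_spec.1, h.choose_spec.2⟩

noncomputable def Rseq (O : ℕ → Set (Set X)) : ℕ → Set X
  | 0 => Set.univ
  | n + 1 => Rseq O n \ pick (Rseq O n) (O n)

noncomputable def strat : List (Set (Set X)) → Set X := fun L =>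
  match L.getLast? with
  | none => ∅
  | some U => pick (List.foldl (fun R V => R \ pick R V) Set.univ L.dropLast) U

theorem foldl_ofFn_eq (O : ℕ → Set (Set X)) :
    ∀ n, List.foldl (fun R V => R \ pick R V) Set.univ
        (List.ofFn fun i : Fin n => O i.1) = Rseq O n := by
  intro n
  induction n with
  | zero => simp [Rseq]
  | succ n ih =>
    rw [List.ofFn_succ']
    simp only [List.concat_eq_append, List.foldl_append, List.foldl_cons, List.foldl_nil]
    rw [show (List.ofFn fun i : Fin n => O (Fin.castSucc i).1) =
        (List.ofFn fun i : Fin n => O i.1) by simp]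
    rw [ih]
    rfl

theorem strat_eq (O : ℕ → Set (Set X)) (n : ℕ) :
    strat (List.ofFn fun i : Fin (n + 1) => O i.1) = pick (Rseq O n) (O n) := by
  rw [List.ofFn_succ']
  simp only [List.concat_eq_append]
  rw [strat]
  rw [List.getLast?_concat, List.dropLast_concat]
  simp only [List.concat_eq_append] at *
  rw [show (List.ofFn fun i : Fin n => O (Fin.castSucc i).1) =
      (List.ofFn fun i : Fin n => O i.1) by simp]
  rw [foldl_ofFn_eq]
  rfl

theorem two_wins (hsc : Scat X) (O : ℕ → Set (Set X))
    (hO : ∀ n, (∀ W ∈ O n, IsOpen W) ∧ ⋃₀ O n = Set.univ) :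
    (∀ n, pick (Rseq O n) (O n) ∈ O n) ∧ (⋃ n, pick (Rseq O n) (O n)) = Set.univ := by
  have hclosed : ∀ n, IsClosed (Rseq O n) := by
    intro n
    induction n with
    | zero => exact isClosed_univ
    | succ n ih =>
      have hTopen : IsOpen (pick (Rseq O n) (O n)) :=
        (hO n).1 _ (pick_spec (hO n).2).1
      exact ih.sdiff hTopen
  refine ⟨fun n => (pick_spec (hO n).2).1, ?_⟩
  by_contra hcov
  obtain ⟨z, -, hz⟩ : ∃ z ∈ Set.univ, z ∉ ⋃ n, pick (Rseq O n) (O n) := by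
    obtain ⟨z, hz⟩ := (Set.ne_univ_iff_exists_notMem _).1 hcov
    exact ⟨z, Set.mem_univ z, hz⟩
  have hzR : ∀ n, z ∈ Rseq O n := by
    intro n
    induction n with
    | zero => exact Set.mem_univ z
    | succ n ih =>
      refine ⟨ih, fun hmem => hz (Set.mem_iUnion.2 ⟨n, hmem⟩)⟩
  have hRne : ∀ n, (Rseq O n).Nonempty := fun n => ⟨z, hzR n⟩
  -- ranks are nonincreasing
  have hrkle : ∀ n, rk (Rseq O (n + 1)) ≤ rk (Rseq O n) :=
    fun n => rk_mono hsc (hclosed n) diff_subset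
  -- pick minimal rank
  obtain ⟨o, ⟨n₀, hn₀⟩, hmin⟩ := Ordinal.lt_wf.has_min (Set.range fun n => rk (Rseq O n))
    ⟨rk (Rseq O 0), ⟨0, rfl⟩⟩
  have hge : ∀ n, o ≤ rk (Rseq O n) := fun n =>
    not_lt.1 (hmin _ ⟨n, rfl⟩)
  have hchain : ∀ k, rk (Rseq O (n₀ + k)) = o := by
    intro k
    induction k with
    | zero => exact hn₀.symm ▸ rfl
    | succ k ih =>
      have h1 : rk (Rseq O (n₀ + k + 1)) ≤ rk (Rseq O (n₀ + k)) := hrkle _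
      exact le_antisymm (ih ▸ h1) (hge _)
  -- now cardinalities of TOP strictly decrease
  have hdec : ∀ k, (TOP (Rseq O (n₀ + k + 1))).ncard < (TOP (Rseq O (n₀ + k))).ncard := by
    intro k
    set R := Rseq O (n₀ + k)
    set R' := Rseq O (n₀ + k + 1) with hR'
    have hss : TOP R' ⊂ TOP R := by
      refine ⟨TOP_mono diff_subset ((hchain (k+1)) ▸ (hchain k).symm ▸ rfl), fun hsub => ?_⟩
      have hx : chP R ∈ TOP R := chP_mem (hclosed _) (hRne _)
      have hx' : chP R ∉ R' := fun h => h.2 (pick_spec (hO (n₀ + k)).2).2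
      exact hx' (TOP_subset R' (hsub hx))
    exact Set.ncard_lt_ncard hss (TOP_finite hsc (hclosed _))
  have habs : ∀ k, (TOP (Rseq O (n₀ + k))).ncard + k ≤ (TOP (Rseq O n₀)).ncard := by
    intro k
    induction k with
    | zero => simp
    | succ k ih =>
      have hd := hdec k
      have he : (TOP (Rseq O (n₀ + (k + 1)))).ncard = (TOP (Rseq O (n₀ + k + 1))).ncard := by
        rw [Nat.add_assoc]
      omega
  have := habs ((TOP (Rseq O n₀)).ncard + 1)
  omega
end Game
section PartA
open Set
variable {X : Type u} [TopologicalSpace X] [CompactSpace X] [T2Space X]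
variable (F : Set X)

theorem exists_split (hF : IsClosed F) (hperf : ∀ x ∈ F, x ∈ closure (F \ {x}))
    {V : Set X} (h : IsOpen V ∧ (V ∩ F).Nonempty) :
    ∃ p : Set X × Set X,
      (IsOpen p.1 ∧ (p.1 ∩ F).Nonempty) ∧ (IsOpen p.2 ∧ (p.2 ∩ F).Nonempty) ∧
      closure p.1 ⊆ V ∧ closure p.2 ⊆ V ∧ closure p.1 ∩ closure p.2 = ∅ := by
  obtain ⟨hVo, x, hxV, hxF⟩ := h
  obtain ⟨y, hyV, hyF, hyx⟩ := mem_closure_iff.1 (hperf x hxF) V hVo hxV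
  have hyx' : y ≠ x := by simpa using hyx
  obtain ⟨A, B, hAo, hBo, hyA, hxB, hAB⟩ := t2_separation hyx'
  obtain ⟨U1, hU1o, hxU1, hU1c⟩ := normal_exists_closure_subset (isClosed_singleton (x := x))
    (hVo.inter hBo) (Set.singleton_subset_iff.2 ⟨hxV, hxB⟩)
  obtain ⟨U2, hU2o, hyU2, hU2c⟩ := normal_exists_closure_subset (isClosed_singleton (x := y))
    (hVo.inter hAo) (Set.singleton_subset_iff.2 ⟨hyV, hyA⟩)
  refine ⟨(U1, U2), ⟨hU1o, ⟨x, hxU1 rfl, hxF⟩⟩, ⟨hU2o, ⟨y, hyU2 rfl, hyF⟩⟩,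
    hU1c.trans inter_subset_left, hU2c.trans inter_subset_left, ?_⟩
  apply Set.eq_empty_of_forall_notMem
  rintro z ⟨hz1, hz2⟩
  exact Set.disjoint_iff.1 hAB ⟨(hU2c hz2).2, (hU1c hz1).2⟩

variable {F}
variable (hF : IsClosed F) (hne : F.Nonempty) (hperf : ∀ x ∈ F, x ∈ closure (F \ {x}))

noncomputable def sch : List Bool → {V : Set X // IsOpen V ∧ (V ∩ F).Nonempty}
  | [] => ⟨Set.univ, isOpen_univ, by simpa [Set.univ_inter] using hne⟩
  | false :: s => ⟨(Classical.choose (exists_split F hF hperf (sch s).2)).1,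
      (Classical.choose_spec (exists_split F hF hperf (sch s).2)).1⟩
  | true :: s => ⟨(Classical.choose (exists_split F hF hperf (sch s).2)).2,
      (Classical.choose_spec (exists_split F hF hperf (sch s).2)).2.1⟩

theorem sch_closure_subset (b : Bool) (s : List Bool) :
    closure (sch hF hne hperf (b :: s)).1 ⊆ (sch hF hne hperf s).1 := by
  have hsp := Classical.choose_spec (exists_split F hF hperf (sch hF hne hperf s).2)
  cases b
  · exact hsp.2.2.1
  · exact hsp.2.2.2.1

theorem sch_sib (s : List Bool) :
    closure (sch hF hne hperf (false :: s)).1 ∩ closure (sch hF hne hperf (true :: s)).1 = ∅ := by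
  have hsp := Classical.choose_spec (exists_split F hF hperf (sch hF hne hperf s).2)
  exact hsp.2.2.2.2

theorem sch_disj : ∀ s t : List Bool, s.length = t.length → s ≠ t →
    closure (sch hF hne hperf s).1 ∩ closure (sch hF hne hperf t).1 = ∅ := by
  intro s
  induction s with
  | nil =>
    intro t hlen hne'
    cases t with
    | nil => exact absurd rfl hne'
    | cons c t' => simp at hlen
  | cons b s' ih =>
    intro t hlen hne'
    cases t with
    | nil => simp at hlen
    | cons c t' =>
      simp only [List.length_cons, Nat.succ.injEq] at hlen
      by_cases hst : s' = t'
      · subst hst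
        have hbc : b ≠ c := fun h => hne' (by rw [h])
        cases b <;> cases c
        · exact absurd rfl hbc
        · exact sch_sib hF hne hperf s'
        · rw [Set.inter_comm]; exact sch_sib hF hne hperf s'
        · exact absurd rfl hbc
      · have h0 := ih t' hlen hst
        apply Set.eq_empty_of_subset_empty
        refine subset_trans (Set.inter_subset_inter ?_ ?_) h0.subset
        · exact (sch_closure_subset hF hne hperf b s').trans subset_closure
        · exact (sch_closure_subset hF hne hperf c t').trans subset_closure

theorem gexists (n : ℕ) :
    ∃ g : C(X, ℝ),
      Set.EqOn g 0 (⋃ s ∈ {l : List Bool | l.length = n}, closure (sch hF hne hperf (false :: s)).1) ∧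
      Set.EqOn g 1 (⋃ s ∈ {l : List Bool | l.length = n}, closure (sch hF hne hperf (true :: s)).1) ∧
      ∀ x, g x ∈ Set.Icc (0 : ℝ) 1 := by
  have hfin : ({l : List Bool | l.length = n}).Finite := List.finite_length_eq _ _
  have hA : IsClosed (⋃ s ∈ {l : List Bool | l.length = n}, closure (sch hF hne hperf (false :: s)).1) :=
    hfin.isClosed_biUnion fun s _ => isClosed_closure
  have hB : IsClosed (⋃ s ∈ {l : List Bool | l.length = n}, closure (sch hF hne hperf (true :: s)).1) :=
    hfin.isClosed_biUnion fun s _ => isClosed_closure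
  refine exists_continuous_zero_one_of_isClosed hA hB ?_
  rw [Set.disjoint_iff]
  rintro x ⟨hx1, hx2⟩
  obtain ⟨s, hs, hxs⟩ := Set.mem_iUnion₂.1 hx1
  obtain ⟨t, ht, hxt⟩ := Set.mem_iUnion₂.1 hx2
  have hs' : s.length = n := hs
  have ht' : t.length = n := ht
  have hd := sch_disj hF hne hperf (false :: s) (true :: t)
    (by simp [hs', ht']) (by simp)
  exact absurd (Set.mem_inter hxs hxt) (by rw [hd]; exact notMem_empty x)

noncomputable def gfun (n : ℕ) : C(X, ℝ) := Classical.choose (gexists hF hne hperf n)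

theorem gfun_spec (n : ℕ) :
    Set.EqOn (gfun hF hne hperf n) 0 (⋃ s ∈ {l : List Bool | l.length = n}, closure (sch hF hne hperf (false :: s)).1) ∧
    Set.EqOn (gfun hF hne hperf n) 1 (⋃ s ∈ {l : List Bool | l.length = n}, closure (sch hF hne hperf (true :: s)).1) ∧
    ∀ x, gfun hF hne hperf n x ∈ Set.Icc (0 : ℝ) 1 := Classical.choose_spec (gexists hF hne hperf n)

noncomputable def ff : X → ℝ := fun x => ∑' n : ℕ, gfun hF hne hperf n x * ((2 : ℝ)⁻¹) ^ (n + 1)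

theorem w_summable : Summable (fun n : ℕ => ((2 : ℝ)⁻¹) ^ (n + 1)) := by
  have h := summable_geometric_two.mul_right (2 : ℝ)⁻¹
  refine h.congr fun n => ?_
  rw [pow_succ]
  norm_num

theorem term_bound (x : X) (n : ℕ) :
    ‖gfun hF hne hperf n x * ((2 : ℝ)⁻¹) ^ (n + 1)‖ ≤ ((2 : ℝ)⁻¹) ^ (n + 1) := by
  have h01 := (gfun_spec hF hne hperf n).2.2 x
  rw [norm_mul]
  have h1 : ‖gfun hF hne hperf n x‖ ≤ 1 := by
    rw [Real.norm_eq_abs, abs_le]; exact ⟨by linarith [h01.1], h01.2⟩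
  have h2 : ‖((2 : ℝ)⁻¹) ^ (n + 1)‖ = ((2 : ℝ)⁻¹) ^ (n + 1) := by
    rw [Real.norm_eq_abs, abs_of_nonneg (by positivity)]
  rw [h2]
  nlinarith [pow_nonneg (by norm_num : (0:ℝ) ≤ (2:ℝ)⁻¹) (n+1), norm_nonneg (gfun hF hne hperf n x)]

theorem ff_continuous : Continuous (ff hF hne hperf) :=
  continuous_tsum (fun n => (gfun hF hne hperf n).continuous.mul continuous_const)
    (w_summable) (fun n x => term_bound hF hne hperf x n)

theorem ff_summable (x : X) :
    Summable (fun n : ℕ => gfun hF hne hperf n x * ((2 : ℝ)⁻¹) ^ (n + 1)) :=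
  Summable.of_norm_bounded w_summable (fun n => term_bound hF hne hperf x n)

noncomputable def valL : List Bool → ℝ
  | [] => 0
  | b :: s => valL s + (if b then ((2 : ℝ)⁻¹) ^ (s.length + 1) else 0)

theorem mem_closure_tail {x : X} (b : Bool) (s : List Bool)
    (hx : x ∈ closure (sch hF hne hperf (b :: s)).1) : x ∈ closure (sch hF hne hperf s).1 :=
  subset_closure ((sch_closure_subset hF hne hperf b s) hx)

theorem digit_eq {x : X} (b : Bool) (s : List Bool)
    (hx : x ∈ closure (sch hF hne hperf (b :: s)).1) :
    gfun hF hne hperf s.length x = (if b then (1 : ℝ) else 0) := by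
  have hmem : x ∈ ⋃ t ∈ {l : List Bool | l.length = s.length},
      closure (sch hF hne hperf (b :: t)).1 := Set.mem_biUnion rfl hx
  cases b
  · simpa using (gfun_spec hF hne hperf s.length).1 hmem
  · simpa using (gfun_spec hF hne hperf s.length).2.1 hmem

theorem sum_eq_val {x : X} : ∀ s : List Bool, x ∈ closure (sch hF hne hperf s).1 →
    (∑ k ∈ Finset.range s.length, gfun hF hne hperf k x * ((2 : ℝ)⁻¹) ^ (k + 1)) = valL s := by
  intro s
  induction s with
  | nil => intro _; simp [valL]
  | cons b s' ih =>
    intro hx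
    have hx' := mem_closure_tail hF hne hperf b s' hx
    rw [List.length_cons, Finset.sum_range_succ, ih hx', digit_eq hF hne hperf b s' hx]
    rw [valL]
    cases b <;> simp

theorem ff_mem_Icc {x : X} (s : List Bool) (hx : x ∈ closure (sch hF hne hperf s).1) :
    ff hF hne hperf x ∈ Set.Icc (valL s) (valL s + ((2 : ℝ)⁻¹) ^ s.length) := by
  have hsum := ff_summable hF hne hperf x
  have hsplit := Summable.sum_add_tsum_nat_add s.length hsum
  have hval := sum_eq_val hF hne hperf s hx
  have htail_nonneg : 0 ≤ ∑' k : ℕ, gfun hF hne hperf (k + s.length) x * ((2 : ℝ)⁻¹) ^ (k + s.length + 1) := by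
    apply tsum_nonneg
    intro k
    have h01 := (gfun_spec hF hne hperf (k + s.length)).2.2 x
    exact mul_nonneg h01.1 (by positivity)
  have htail_le : (∑' k : ℕ, gfun hF hne hperf (k + s.length) x * ((2 : ℝ)⁻¹) ^ (k + s.length + 1))
      ≤ ((2 : ℝ)⁻¹) ^ s.length := by
    have hgeo : (∑' k : ℕ, ((2 : ℝ)⁻¹) ^ s.length / 2 / 2 ^ k) = ((2 : ℝ)⁻¹) ^ s.length :=
      tsum_geometric_two' _
    rw [← hgeo]
    apply Summable.tsum_le_tsum
    · intro k
      have h01 := (gfun_spec hF hne hperf (k + s.length)).2.2 x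
      have heq : ((2 : ℝ)⁻¹) ^ s.length / 2 / 2 ^ k = ((2 : ℝ)⁻¹) ^ (k + s.length + 1) := by
        rw [pow_add, pow_add]
        field_simp
        ring_nf
        rw [← mul_pow]
        norm_num
      rw [heq]
      exact mul_le_of_le_one_left (by positivity) h01.2
    · exact (summable_nat_add_iff
        (f := fun n : ℕ => gfun hF hne hperf n x * ((2 : ℝ)⁻¹) ^ (n + 1)) s.length).2 hsum
    · exact summable_geometric_two' _
  constructor
  · rw [← hval]
    rw [ff, ← hsplit]
    linarith
  · rw [ff, ← hsplit, ← hval]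
    linarith
end PartA
section Dodge
open Set
variable {X : Type u} [TopologicalSpace X] [CompactSpace X] [T2Space X]
variable {F : Set X} (hF : IsClosed F) (hne : F.Nonempty) (hperf : ∀ x ∈ F, x ∈ closure (F \ {x}))

noncomputable def eps (n : ℕ) : ℝ := ((2 : ℝ)⁻¹) ^ (2 * n + 3)

theorem eps_pos (n : ℕ) : 0 < eps n := by rw [eps]; positivity

open Classical in
noncomputable def pr (q : ℕ → ℝ) : ℕ → List Bool
  | 0 => []
  | n + 1 =>
    if (Set.Ioo (q n - eps n) (q n + eps n) ∩
        Set.Icc (valL (pr q n) + 2 * ((2 : ℝ)⁻¹) ^ (2 * n + 2))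
          (valL (pr q n) + 3 * ((2 : ℝ)⁻¹) ^ (2 * n + 2))).Nonempty
    then false :: false :: pr q n
    else false :: true :: pr q n

theorem pr_len (q : ℕ → ℝ) : ∀ n, (pr q n).length = 2 * n
  | 0 => rfl
  | n + 1 => by
    rw [pr]
    split <;> simp only [List.length_cons, pr_len q n] <;> omega

theorem pr_succ_shape (q : ℕ → ℝ) (n : ℕ) : ∃ a b : Bool, pr q (n + 1) = a :: b :: pr q n := by
  rw [pr]
  split
  · exact ⟨false, false, rfl⟩
  · exact ⟨false, true, rfl⟩

theorem valL_false (s : List Bool) : valL (false :: s) = valL s := by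
  rw [valL]; simp

theorem valL_true (s : List Bool) : valL (true :: s) = valL s + ((2 : ℝ)⁻¹) ^ (s.length + 1) := by
  rw [valL]; simp

theorem pr_dodge (q : ℕ → ℝ) (n : ℕ) :
    Set.Ioo (q n - eps n) (q n + eps n) ∩
      Set.Icc (valL (pr q (n + 1))) (valL (pr q (n + 1)) + ((2 : ℝ)⁻¹) ^ (2 * (n + 1))) = ∅ := by
  have hlen : (pr q n).length = 2 * n := pr_len q n
  set e : ℝ := ((2 : ℝ)⁻¹) ^ (2 * n + 2) with he
  set v : ℝ := valL (pr q n) with hv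
  have hpow : ((2 : ℝ)⁻¹) ^ (2 * (n + 1)) = e := by rw [he]; congr 1
  have heps2 : 2 * eps n = e := by rw [eps, he]; ring
  have hval : ((2 : ℝ)⁻¹) ^ (2 * n + 1) = 2 * e := by rw [he]; ring
  rw [pr]
  split
  · rename_i hcase
    rw [valL_false, valL_false, hpow, ← hv]
    obtain ⟨z, hz1, hz2⟩ := hcase
    apply Set.eq_empty_of_forall_notMem
    rintro y ⟨hy1, hy2⟩
    have h2 : v + 2 * e ≤ z := hz2.1
    have h3 : y ≤ v + e := hy2.2
    have h1 : z - y < e := by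
      rw [← heps2]
      have hza := hz1.2
      have hyb := hy1.1
      linarith
    linarith
  · rename_i hcase
    rw [valL_false, valL_true, hlen, hpow, ← hv, hval]
    rw [Set.not_nonempty_iff_eq_empty] at hcase
    have h3e : v + 2 * e + e = v + 3 * e := by ring
    rw [h3e]
    exact hcase

theorem scat_of_hS1 {X : Type u} [TopologicalSpace X] [CompactSpace X] [T2Space X]
    (hS1 : ∀ U : ℕ → Set (Set X),
      (∀ n, (∀ W ∈ U n, IsOpen W) ∧ ⋃₀ U n = Set.univ) →
      ∃ T : ℕ → Set X, (∀ n, T n ∈ U n) ∧ (⋃ n, T n) = Set.univ) :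
    Scat X := by
  intro F hF hneF
  by_contra hcon
  push_neg at hcon
  set f : X → ℝ := ff hF hneF hcon with hfdef
  have hfc : Continuous f := ff_continuous hF hneF hcon
  set U : ℕ → Set (Set X) :=
    fun n => (fun q : ℝ => f ⁻¹' Set.Ioo (q - eps n) (q + eps n)) '' Set.univ with hU
  have hUcov : ∀ n, (∀ W ∈ U n, IsOpen W) ∧ ⋃₀ U n = Set.univ := by
    intro n
    constructor
    · rintro W ⟨p, -, rfl⟩
      exact isOpen_Ioo.preimage hfc
    · apply Set.eq_univ_of_forall
      intro x
      refine Set.mem_sUnion.2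
        ⟨f ⁻¹' Set.Ioo (f x - eps n) (f x + eps n), ⟨f x, Set.mem_univ _, rfl⟩, ?_⟩
      have hp := eps_pos n
      constructor <;> simp <;> linarith
  obtain ⟨T, hTmem, hTcov⟩ := hS1 U hUcov
  have hTmem' : ∀ n, ∃ p : ℝ, f ⁻¹' Set.Ioo (p - eps n) (p + eps n) = T n := by
    intro n
    obtain ⟨p, -, hp⟩ := hTmem n
    exact ⟨p, hp⟩
  choose q hq using hTmem'
  have hnested : ∀ n, (closure (sch hF hneF hcon (pr q (n + 1))).1 ∩ F)
      ⊆ closure (sch hF hneF hcon (pr q n)).1 ∩ F := by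
    intro n
    obtain ⟨a, b, hab⟩ := pr_succ_shape q n
    rw [hab]
    refine Set.inter_subset_inter (fun x hx => ?_) subset_rfl
    exact mem_closure_tail hF hneF hcon b _ (mem_closure_tail hF hneF hcon a _ hx)
  have hnonempty : ∀ n, (closure (sch hF hneF hcon (pr q n)).1 ∩ F).Nonempty := by
    intro n
    obtain ⟨x, hx1, hx2⟩ := (sch hF hneF hcon (pr q n)).2.2
    exact ⟨x, subset_closure hx1, hx2⟩
  obtain ⟨x, hx⟩ := IsCompact.nonempty_iInter_of_sequence_nonempty_isCompact_isClosed
    (fun n => closure (sch hF hneF hcon (pr q n)).1 ∩ F) hnested hnonempty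
    (isClosed_closure.inter hF).isCompact (fun n => isClosed_closure.inter hF)
  have hxall : ∀ n, x ∉ T n := by
    intro n hxT
    rw [← hq n] at hxT
    have hx1 : x ∈ closure (sch hF hneF hcon (pr q (n + 1))).1 := (Set.mem_iInter.1 hx (n + 1)).1
    have hicc := ff_mem_Icc hF hneF hcon (pr q (n + 1)) hx1
    rw [pr_len] at hicc
    have hd := pr_dodge q n
    have hmem : f x ∈ Set.Ioo (q n - eps n) (q n + eps n) := hxT
    have : f x ∈ (∅ : Set ℝ) := hd ▸ Set.mem_inter hmem hicc
    exact this
  obtain ⟨n, hn⟩ := Set.mem_iUnion.1 (show x ∈ ⋃ n, T n from hTcov ▸ Set.mem_univ x)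
  exact hxall n hn
end Dodge
/-- If a compact Hausdorff space satisfies `S₁(O,O)`, then player TWO has a winning
strategy in the game `G₁(O,O)`: a function choosing, from each finite history of open
covers played by ONE, one member of the last cover, so that the choices always cover. -/
theorem stmt12 {X : Type*} [TopologicalSpace X] [CompactSpace X] [T2Space X]
    (hS1 : ∀ U : ℕ → Set (Set X),
      (∀ n, (∀ W ∈ U n, IsOpen W) ∧ ⋃₀ U n = Set.univ) →
      ∃ T : ℕ → Set X, (∀ n, T n ∈ U n) ∧ (⋃ n, T n) = Set.univ) :
    ∃ τ : List (Set (Set X)) → Set X,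
      ∀ O : ℕ → Set (Set X),
        (∀ n, (∀ W ∈ O n, IsOpen W) ∧ ⋃₀ O n = Set.univ) →
        (∀ n, τ (List.ofFn fun i : Fin (n + 1) => O i.1) ∈ O n) ∧
        (⋃ n, τ (List.ofFn fun i : Fin (n + 1) => O i.1)) = Set.univ := by
  by_cases hX : Nonempty X
  · have hsc : Scat X := scat_of_hS1 hS1
    refine ⟨strat, fun O hO => ?_⟩
    have h := two_wins hsc O hO
    constructor
    · intro n
      rw [strat_eq]
      exact h.1 n
    · have heq : (⋃ n, strat (List.ofFn fun i : Fin (n + 1) => O i.1))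
          = ⋃ n, pick (Rseq O n) (O n) := by
        apply Set.iUnion_congr
        intro n
        rw [strat_eq]
      rw [heq]
      exact h.2
  · obtain ⟨T, hT, -⟩ := hS1 (fun _ => (∅ : Set (Set X)))
      (fun n => ⟨fun W hW => absurd hW (Set.notMem_empty W), by
        rw [Set.sUnion_empty]
        exact (Set.univ_eq_empty_iff.2 (not_nonempty_iff.1 hX)).symm⟩)
    exact absurd (hT 0) (Set.notMem_empty _)
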